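/- Let (R,m) be a Noetherian local ring which is a homomorphic image of a Cohen-Macaulay local ring, M a finitely generated R-module of dimension d with dimension filtration M = D_0 ⊃ … ⊃ D_s = H^0_m(M), q a parameter ideal, and x ∈ q a superficial element of each D_i with respect to q with Ass((D_i/D_{i+1})/x(D_i/D_{i+1})) ⊆ Assh((D_i/D_{i+1})/x(D_i/D_{i+1})) ∪ {m} for all i and x regular on M/D_i for i = 1,…,s. Let F: M = M_0 ⊃ M_1 ⊃ … ⊃ M_s be a filtration of submodules such that D_i/M_i has finite length for each i = 0,…,s, and assume q is a distinguished parameter ideal of M with respect to F. Then there exists a distinguished system of parameters x_1,…,x_d of M with respect to F such that x_1 = x and q = (x_1,…,x_d). -/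

import Mathlib

open IsLocalRing Filter Pointwise

noncomputable section

namespace Paper

variable (R : Type*) [CommRing R]

/-- The (Krull) dimension of a module `M`, defined as `dim (R / Ann M)`
(`⊥` for the zero module). -/
noncomputable def mdim (M : Type*) [AddCommGroup M] [Module R M] : WithBot ℕ∞ :=
  ringKrullDim (R ⧸ Module.annihilator R M)

/-- The dimension of a submodule. -/
noncomputable def sdim {M : Type*} [AddCommGroup M] [Module R M] (N : Submodule R M) :
    WithBot ℕ∞ :=
  mdim R N

/-- The length of a module, as the Krull dimension of its lattice of submodules. -/
noncomputable def len (M : Type*) [AddCommGroup M] [Module R M] : WithBot ℕ∞ :=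
  Order.krullDim (Submodule R M)

/-- The zeroth local cohomology `H^0_m(M)`, i.e. the `m`-power torsion of `M`. -/
def H0 [IsLocalRing R] (M : Type*) [AddCommGroup M] [Module R M] : Submodule R M :=
  ⨆ n : ℕ, Submodule.torsionBySet R M ((maximalIdeal R ^ n : Ideal R) : Set R)

/-- `Assh M` : associated primes with `dim R/p = dim M`. -/
def Assh (M : Type*) [AddCommGroup M] [Module R M] : Set (Ideal R) :=
  {p ∈ associatedPrimes R M | ringKrullDim (R ⧸ p) = mdim R M}

/-- The quotient `P/Q` of two submodules of `M` (interpreting `Q` inside `P`). -/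
abbrev subQuot {M : Type*} [AddCommGroup M] [Module R M] (P Q : Submodule R M) : Type _ :=
  ↥P ⧸ Q.comap P.subtype

/-- `M/xM`. -/
abbrev modx (x : R) (M : Type*) [AddCommGroup M] [Module R M] : Type _ :=
  M ⧸ (Ideal.span {x} • ⊤ : Submodule R M)

/-- An ideal is `m`-primary. -/
def IsMPrimary [IsLocalRing R] (I : Ideal R) : Prop :=
  I ≤ maximalIdeal R ∧ ∃ n : ℕ, maximalIdeal R ^ n ≤ I

/-- The coefficients `e` give the Hilbert–Samuel polynomial of `M` with respect to `I`,
normalized with respect to the integer `d`: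
`ℓ(M/I^{n+1}M) = ∑_{i=0}^d (-1)^i e_i C(n+d-i, d-i)` for all large `n`. -/
def HasHilbertPoly [IsLocalRing R] (I : Ideal R) (M : Type*) [AddCommGroup M] [Module R M]
    (d : ℕ) (e : ℕ → ℤ) : Prop :=
  (∀ j, d < j → e j = 0) ∧
  ∀ᶠ n : ℕ in Filter.atTop, ∃ l : ℕ,
    len R (M ⧸ (I ^ (n + 1) • ⊤ : Submodule R M)) = (l : ℕ∞) ∧
    (l : ℤ) = ∑ i ∈ Finset.range (d + 1),
      (-1) ^ i * e i * (Nat.choose (n + d - i) (d - i) : ℤ)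

open Classical in
/-- The Hilbert coefficient `e_j(I, M)` (with `d` the dimension of `M`). -/
noncomputable def hilbCoeff [IsLocalRing R] (I : Ideal R) (M : Type*) [AddCommGroup M]
    [Module R M] (d : ℕ) (j : ℕ) : ℤ :=
  if h : ∃ e : ℕ → ℤ, HasHilbertPoly R I M d e then h.choose j else 0

open Classical in
/-- The length-multiplicity `mult_M(p) = ℓ_{R_p}(H^0_{pR_p}(M_p))`. -/
noncomputable def lengthMult (p : Ideal R) (M : Type*) [AddCommGroup M] [Module R M] : ℕ :=
  if hp : p.IsPrime then
    haveI := hp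
    (WithBot.unbotD 0 (len (Localization.AtPrime p)
        (H0 (Localization.AtPrime p) (LocalizedModule p.primeCompl M)))).toNat
  else 0

/-- The `i`-th arithmetic degree `ardeg_i(I,M)`. -/
noncomputable def ardeg [IsLocalRing R] (I : Ideal R) (M : Type*) [AddCommGroup M] [Module R M]
    (i : ℕ) : ℤ :=
  ∑ᶠ p ∈ {p ∈ associatedPrimes R M | ringKrullDim (R ⧸ p) = (i : WithBot ℕ∞)},
    (lengthMult R p M : ℤ) * hilbCoeff R I (R ⧸ p) i 0

variable [IsLocalRing R]

/-- A system of parameters for `M`. -/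
def IsParamSystem (M : Type*) [AddCommGroup M] [Module R M] {d : ℕ} (x : Fin d → R) : Prop :=
  mdim R M = (d : WithBot ℕ∞) ∧ (∀ i, x i ∈ maximalIdeal R) ∧
    IsFiniteLength R (M ⧸ (Ideal.span (Set.range x) • ⊤ : Submodule R M))

/-- A parameter ideal of `M`. -/
def IsParamIdeal (M : Type*) [AddCommGroup M] [Module R M] (d : ℕ) (q : Ideal R) : Prop :=
  ∃ x : Fin d → R, IsParamSystem R M x ∧ q = Ideal.span (Set.range x)

/-- A good system of parameters: `N ∩ (x_{dim N + 1}, …, x_d)M = 0` for every submodule `N`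
of dimension `< d`. (Indices are `0`-based: `x j` here is `x_{j+1}` in the paper.) -/
def IsGoodSOP (M : Type*) [AddCommGroup M] [Module R M] {d : ℕ} (x : Fin d → R) : Prop :=
  IsParamSystem R M x ∧
    ∀ (N : Submodule R M) (k : ℕ), sdim R N = (k : WithBot ℕ∞) → k < d →
      N ⊓ (Ideal.span (x '' {j : Fin d | k ≤ (j : ℕ)}) • ⊤) = ⊥

/-- A distinguished system of parameters with respect to a filtration `F` of length `t`:
`(x_{dim F_i + 1}, …, x_d) ⊆ Ann (F i)` for `1 ≤ i ≤ t`. -/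
def IsDistSOP (M : Type*) [AddCommGroup M] [Module R M] (F : ℕ → Submodule R M) (t : ℕ)
    {d : ℕ} (x : Fin d → R) : Prop :=
  IsParamSystem R M x ∧
    ∀ i, 1 ≤ i → i ≤ t → ∀ k : ℕ, sdim R (F i) = (k : WithBot ℕ∞) →
      ∀ j : Fin d, k ≤ (j : ℕ) → x j ∈ Module.annihilator R ↥(F i)

/-- A distinguished parameter ideal with respect to a filtration. -/
def IsDistParamIdeal (M : Type*) [AddCommGroup M] [Module R M] (F : ℕ → Submodule R M)
    (t d : ℕ) (q : Ideal R) : Prop :=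
  ∃ x : Fin d → R, IsDistSOP R M F t x ∧ q = Ideal.span (Set.range x)

/-- A (strictly decreasing) filtration `M = F 0 ⊃ F 1 ⊃ … ⊃ F t` of submodules. -/
def IsFiltration (M : Type*) [AddCommGroup M] [Module R M] (F : ℕ → Submodule R M)
    (t : ℕ) : Prop :=
  F 0 = ⊤ ∧ ∀ i, i < t → F (i + 1) < F i

/-- The dimension filtration `M = D 0 ⊃ D 1 ⊃ … ⊃ D s = H^0_m(M)`, where `D i` is the largest
submodule of `D (i-1)` of strictly smaller dimension. -/
def IsDimFiltration (M : Type*) [AddCommGroup M] [Module R M] (D : ℕ → Submodule R M)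
    (s : ℕ) : Prop :=
  D 0 = ⊤ ∧ D s = H0 R M ∧
    ∀ i, 1 ≤ i → i ≤ s →
      D i ≤ D (i - 1) ∧ sdim R (D i) < sdim R (D (i - 1)) ∧
        ∀ N : Submodule R M, N ≤ D (i - 1) → sdim R N < sdim R (D (i - 1)) → N ≤ D i

/-- `x ∈ q` is a superficial element of `N ⊆ M` with respect to `q` :
`(q^{n+1}N :_N x) ∩ q^c N = q^n N` for all large `n`. -/
def IsSuperficial {M : Type*} [AddCommGroup M] [Module R M] (q : Ideal R) (N : Submodule R M)
    (x : R) : Prop :=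
  x ∈ q ∧ ∃ c : ℕ, ∀ᶠ n : ℕ in Filter.atTop,
    ((q ^ (n + 1) • N).comap (LinearMap.lsmul R M x) ⊓ N) ⊓ (q ^ c • N) = q ^ n • N

/-- A Cohen–Macaulay module: every system of parameters is a regular sequence. -/
def IsCMModule (M : Type*) [AddCommGroup M] [Module R M] : Prop :=
  ∀ (d : ℕ) (x : Fin d → R), IsParamSystem R M x →
    RingTheory.Sequence.IsRegular M (List.ofFn x)

/-- A sequentially Cohen–Macaulay module. -/
def IsSeqCM (M : Type*) [AddCommGroup M] [Module R M] : Prop :=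
  ∃ (t : ℕ) (F : ℕ → Submodule R M), IsFiltration R M F t ∧
    sdim R (F t) ≤ (0 : WithBot ℕ∞) ∧
    ∀ i, i < t → IsCMModule R (subQuot R (F i) (F (i + 1)))

/-- The unmixed component `U_M(0)`: the largest submodule of dimension `< dim M`. -/
noncomputable def unmixedPart (M : Type*) [AddCommGroup M] [Module R M] : Submodule R M :=
  sSup {N : Submodule R M | sdim R N < mdim R M}

/-- `J` is a reduction of `I`. -/
def IsReduction (I J : Ideal R) : Prop :=
  J ≤ I ∧ ∃ n : ℕ, I ^ (n + 1) = J * I ^ n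

/-- `J` is a minimal reduction of `I`. -/
def IsMinimalReduction (I J : Ideal R) : Prop :=
  IsReduction R I J ∧ ∀ J' : Ideal R, J' ≤ J → IsReduction R I J' → J' = J



section GenericSmul

variable {A : Type*} [CommRing A] {W : Type*} [AddCommGroup W] [Module A W]

lemma mulSmul_aux (I J : Ideal A) (P : Submodule A W) : (I * J) • P = I • (J • P) := by
  rw [← Ideal.smul_eq_mul, Submodule.smul_assoc]

lemma smulComm_aux (I J : Ideal A) (P : Submodule A W) : I • (J • P) = J • (I • P) := by
  rw [← mulSmul_aux, mul_comm, mulSmul_aux]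

end GenericSmul

section ArtinReesTransfer

universe u₁ u₂

variable {R₀ : Type u₁} [CommRing R₀]
variable {M₀ : Type u₂} [AddCommGroup M₀] [Module R₀ M₀]

/-- Lift of a submodule to the `ULift`ed ring and module. -/
def liftS (P : Submodule R₀ M₀) : Submodule (ULift.{u₂} R₀) (ULift.{u₁} M₀) where
  carrier := {x | x.down ∈ P}
  add_mem' := fun ha hb => P.add_mem ha hb
  zero_mem' := P.zero_mem
  smul_mem' := fun c x hx => P.smul_mem c.down hx

lemma mem_liftS {P : Submodule R₀ M₀} {x : ULift.{u₁} M₀} :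
    x ∈ liftS P ↔ x.down ∈ P := Iff.rfl

lemma liftS_smul (I : Ideal R₀) (P : Submodule R₀ M₀) :
    liftS (I • P) =
      Ideal.comap (ULift.ringEquiv : ULift.{u₂} R₀ ≃+* R₀) I • liftS P := by
  apply le_antisymm
  · intro x hx
    have hx' : x.down ∈ I • P := hx
    have key : ∀ m ∈ I • P, (ULift.up m : ULift.{u₁} M₀) ∈
        Ideal.comap (ULift.ringEquiv : ULift.{u₂} R₀ ≃+* R₀) I • liftS P := by
      intro m hm
      refine Submodule.smul_induction_on hm ?_ ?_
      · intro r hr n hn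
        have h1 : (ULift.up (r • n) : ULift.{u₁} M₀) =
            (ULift.up r : ULift.{u₂} R₀) • ULift.up n := rfl
        rw [h1]
        exact Submodule.smul_mem_smul (Ideal.mem_comap.mpr hr) hn
      · intro m1 m2 h1 h2
        have h3 : (ULift.up (m1 + m2) : ULift.{u₁} M₀) = ULift.up m1 + ULift.up m2 := rfl
        rw [h3]
        exact Submodule.add_mem _ h1 h2
    have := key x.down hx'
    simpa using this
  · refine Submodule.smul_le.mpr fun r' hr' x hx => ?_
    show (r' • x).down ∈ I • P
    have h1 : (r' • x).down = r'.down • x.down := rfl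
    rw [h1]
    exact Submodule.smul_mem_smul (Ideal.mem_comap.mp hr') hx

lemma liftS_top : (liftS (⊤ : Submodule R₀ M₀)) = ⊤ := by
  ext x; simp [mem_liftS]

/-- Artin–Rees, transferred to allow different universes for the ring and the module. -/
lemma artinRees_le [IsNoetherianRing R₀] [Module.Finite R₀ M₀]
    (q : Ideal R₀) (N : Submodule R₀ M₀) :
    ∃ k : ℕ, ∀ n, k ≤ n → ((q ^ n • ⊤ : Submodule R₀ M₀) ⊓ N) ≤ q ^ (n - k) • N := by
  classical
  haveI hNoeth : IsNoetherianRing (ULift.{u₂} R₀) :=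
    isNoetherianRing_of_ringEquiv R₀ (ULift.ringEquiv : ULift.{u₂} R₀ ≃+* R₀).symm
  haveI hFin : Module.Finite (ULift.{u₂} R₀) (ULift.{u₁} M₀) := by
    obtain ⟨s, hs⟩ := Module.finite_def.mp ‹Module.Finite R₀ M₀›
    refine Module.Finite.of_fg_top ⟨s.image ULift.up, ?_⟩
    rw [Finset.coe_image]
    refine eq_top_iff.mpr fun x _ => ?_
    have hx : x.down ∈ Submodule.span R₀ (↑s : Set M₀) := hs ▸ Submodule.mem_top
    have key : ∀ m ∈ Submodule.span R₀ (↑s : Set M₀),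
        (ULift.up m : ULift.{u₁} M₀) ∈
          Submodule.span (ULift.{u₂} R₀) (ULift.up '' (↑s : Set M₀)) := by
      intro m hm
      refine Submodule.span_induction
        (p := fun m _ => (ULift.up m : ULift.{u₁} M₀) ∈
          Submodule.span (ULift.{u₂} R₀) (ULift.up '' (↑s : Set M₀)))
        ?_ ?_ ?_ ?_ hm
      · exact fun y hy => Submodule.subset_span ⟨y, hy, rfl⟩
      · exact Submodule.zero_mem _
      · intro p1 p2 _ _ h1 h2
        have h3 : (ULift.up (p1 + p2) : ULift.{u₁} M₀) = ULift.up p1 + ULift.up p2 := rfl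
        rw [h3]; exact Submodule.add_mem _ h1 h2
      · intro r p _ h1
        have h3 : (ULift.up (r • p) : ULift.{u₁} M₀) =
            (ULift.up r : ULift.{u₂} R₀) • ULift.up p := rfl
        rw [h3]; exact Submodule.smul_mem _ _ h1
    have := key x.down hx
    simpa using this
  set q' : Ideal (ULift.{u₂} R₀) :=
    Ideal.comap (ULift.ringEquiv : ULift.{u₂} R₀ ≃+* R₀) q with hq'
  have hpow : ∀ n : ℕ,
      Ideal.comap (ULift.ringEquiv : ULift.{u₂} R₀ ≃+* R₀) (q ^ n) = q' ^ n := by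
    intro n
    rw [hq']
    rw [← Ideal.map_symm (ULift.ringEquiv : ULift.{u₂} R₀ ≃+* R₀),
      ← Ideal.map_symm (ULift.ringEquiv : ULift.{u₂} R₀ ≃+* R₀), Ideal.map_pow]
  obtain ⟨k, hk⟩ := Ideal.exists_pow_inf_eq_pow_smul (I := q') (liftS N)
  refine ⟨k, fun n hn m hm => ?_⟩
  have h1 : (ULift.up m : ULift.{u₁} M₀) ∈
      (q' ^ n • ⊤ : Submodule (ULift.{u₂} R₀) (ULift.{u₁} M₀)) ⊓ liftS N := by
    refine Submodule.mem_inf.mpr ⟨?_, (Submodule.mem_inf.mp hm).2⟩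
    rw [← liftS_top (R₀ := R₀) (M₀ := M₀), ← hpow, ← liftS_smul]
    exact (Submodule.mem_inf.mp hm).1
  rw [hk n hn] at h1
  have h2 : (ULift.up m : ULift.{u₁} M₀) ∈ q' ^ (n - k) • liftS N :=
    Submodule.smul_mono le_rfl inf_le_right h1
  have h3 : q' ^ (n - k) • liftS N = liftS (q ^ (n - k) • N) := by
    rw [← hpow, ← liftS_smul]
  rw [h3] at h2
  exact h2

end ArtinReesTransfer

section AuxiliaryLemmas

lemma natcast_nonpos_aux {e : ℕ} (h : (e : WithBot ℕ∞) ≤ 0) : e = 0 := by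
  have h' : ((e : ℕ∞) : WithBot ℕ∞) ≤ ((0 : ℕ∞) : WithBot ℕ∞) := by exact_mod_cast h
  have h2 : (e : ℕ∞) ≤ 0 := WithBot.coe_le_coe.mp h'
  exact_mod_cast le_antisymm h2 zero_le

variable [IsNoetherianRing R]

/-- A finite length module is killed by a power of the maximal ideal. -/
lemma pow_ann_of_finiteLength {W : Type*} [AddCommGroup W] [Module R W]
    (h : IsFiniteLength R W) :
    ∃ n : ℕ, ∀ r ∈ maximalIdeal R ^ n, ∀ w : W, r • w = 0 := by
  obtain ⟨hN, hA⟩ := isFiniteLength_iff_isNoetherian_isArtinian.mp h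
  obtain ⟨n, hn⟩ := IsArtinian.monotone_stabilizes (R := R) (M := W)
    ⟨fun n => OrderDual.toDual (maximalIdeal R ^ n • ⊤ : Submodule R W),
     fun a b hab => Submodule.smul_mono_left (Ideal.pow_le_pow_right hab)⟩
  have h1 : (maximalIdeal R ^ n • ⊤ : Submodule R W) = maximalIdeal R ^ (n + 1) • ⊤ :=
    hn (n + 1) (Nat.le_succ n)
  have h2 : (maximalIdeal R ^ n • ⊤ : Submodule R W) = ⊥ := by
    refine Submodule.eq_bot_of_le_smul_of_le_jacobson_bot (maximalIdeal R) _
      (IsNoetherian.noetherian _) (le_of_eq ?_) (IsLocalRing.maximalIdeal_le_jacobson ⊥)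
    calc maximalIdeal R ^ n • (⊤ : Submodule R W)
        = maximalIdeal R ^ (n + 1) • ⊤ := h1
      _ = (maximalIdeal R * maximalIdeal R ^ n) • ⊤ := by rw [pow_succ']
      _ = maximalIdeal R • (maximalIdeal R ^ n • ⊤) := mulSmul_aux _ _ _
  refine ⟨n, fun r hr w => ?_⟩
  have h3 : r • w ∈ (⊥ : Submodule R W) := by
    rw [← h2]; exact Submodule.smul_mem_smul hr Submodule.mem_top
  simpa using h3

/-- `H^0_m(M)` is killed by a power of the maximal ideal. -/
lemma exists_H0_killed (M : Type*) [AddCommGroup M] [Module R M] [Module.Finite R M] :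
    ∃ K : ℕ, ∀ r ∈ maximalIdeal R ^ K, ∀ w ∈ H0 R M, r • w = (0 : M) := by
  set f : ℕ →o Submodule R M :=
    ⟨fun n => Submodule.torsionBySet R M ((maximalIdeal R ^ n : Ideal R) : Set R),
     fun a b hab => Submodule.torsionBySet_le_torsionBySet_of_subset
       (SetLike.coe_subset_coe.mpr (Ideal.pow_le_pow_right hab))⟩ with hf
  obtain ⟨K, hK⟩ := monotone_stabilizes_iff_noetherian.mpr inferInstance f
  refine ⟨K, fun r hr w hw => ?_⟩
  have hle : H0 R M ≤ f K := by
    refine iSup_le fun i => ?_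
    rcases le_total i K with h | h
    · exact f.mono h
    · exact le_of_eq (hK i h).symm
  exact (Submodule.mem_torsionBySet_iff _ _).mp (hle hw) ⟨r, hr⟩

lemma ringKrullDim_quotient_nonpos {I : Ideal R} {K : ℕ}
    (h : maximalIdeal R ^ K ≤ I) : ringKrullDim (R ⧸ I) ≤ 0 := by
  have key : ∀ P : PrimeSpectrum (R ⧸ I),
      P.asIdeal.comap (Ideal.Quotient.mk I) = maximalIdeal R := by
    intro P
    have hprime : (P.asIdeal.comap (Ideal.Quotient.mk I)).IsPrime := inferInstance
    have hIle : I ≤ P.asIdeal.comap (Ideal.Quotient.mk I) := by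
      intro a ha
      show (Ideal.Quotient.mk I) a ∈ P.asIdeal
      rw [Ideal.Quotient.eq_zero_iff_mem.mpr ha]
      exact zero_mem _
    have hpow : maximalIdeal R ^ K ≤ P.asIdeal.comap (Ideal.Quotient.mk I) := h.trans hIle
    cases K with
    | zero =>
      exact absurd (top_le_iff.mp (by simpa using hpow)) hprime.ne_top
    | succ K' =>
      have hm : maximalIdeal R ≤ P.asIdeal.comap (Ideal.Quotient.mk I) :=
        (Ideal.IsPrime.pow_le_iff (Nat.succ_ne_zero K')).mp hpow
      exact ((IsLocalRing.maximalIdeal.isMaximal R).eq_of_le hprime.ne_top hm).symm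
  have hsub : Subsingleton (PrimeSpectrum (R ⧸ I)) := by
    constructor
    intro P Q
    exact PrimeSpectrum.ext (Ideal.comap_injective_of_surjective (Ideal.Quotient.mk I)
      Ideal.Quotient.mk_surjective ((key P).trans (key Q).symm))
  exact Order.krullDim_nonpos_of_subsingleton

lemma pow_le_annihilator_of_smul_eq_bot {M : Type*} [AddCommGroup M] [Module R M]
    {W : Submodule R M} {K : ℕ} (h : maximalIdeal R ^ K • W = ⊥) :
    maximalIdeal R ^ K ≤ Module.annihilator R ↥W := by
  intro r hr
  rw [Module.mem_annihilator]
  rintro ⟨w, hw⟩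
  have h0 : r • w = 0 := by
    have h1 : r • w ∈ (⊥ : Submodule R M) := by
      rw [← h]; exact Submodule.smul_mem_smul hr hw
    simpa using h1
  exact Subtype.ext (by simpa using h0)

/-- Key consequence of superficiality: if `x = u + v` with `u ∈ m·q` and `v` killing `F'`,
where `m^{n0}·N ⊆ F'`, then a power of `m` kills `N`. -/
lemma core_superficial {M : Type*} [AddCommGroup M] [Module R M] [Module.Finite R M]
    (q : Ideal R) (hq : q ≤ maximalIdeal R)
    (t : ℕ) (ht : maximalIdeal R ^ t • (⊤ : Submodule R M) ≤ q • ⊤)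
    (N F' : Submodule R M)
    (x u v : R) (hxuv : x = u + v)
    (hu : u ∈ maximalIdeal R * q) (hv : ∀ w ∈ F', v • w = (0 : M))
    (n0 : ℕ) (hn0 : maximalIdeal R ^ n0 • N ≤ F')
    (hsup : IsSuperficial R q N x) :
    ∃ K : ℕ, maximalIdeal R ^ K • N = ⊥ := by
  obtain ⟨hxq, c, hc⟩ := hsup
  obtain ⟨nst, hnst⟩ := Filter.eventually_atTop.mp hc
  have hpow : ∀ n : ℕ, maximalIdeal R ^ (t * n) • (⊤ : Submodule R M) ≤ q ^ n • ⊤ := by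
    intro n
    induction n with
    | zero => simp [Ideal.one_eq_top]
    | succ n ih =>
      have he2 : t * (n + 1) = t * n + t := by ring
      calc maximalIdeal R ^ (t * (n + 1)) • (⊤ : Submodule R M)
          = maximalIdeal R ^ (t * n) • (maximalIdeal R ^ t • ⊤) := by
            rw [he2, pow_add, mulSmul_aux]
        _ ≤ maximalIdeal R ^ (t * n) • (q • ⊤) := Submodule.smul_mono le_rfl ht
        _ = q • (maximalIdeal R ^ (t * n) • ⊤) := smulComm_aux _ _ _
        _ ≤ q • (q ^ n • ⊤) := Submodule.smul_mono le_rfl ih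
        _ = q ^ (n + 1) • ⊤ := by rw [← mulSmul_aux, ← pow_succ']
  obtain ⟨k, hk⟩ := artinRees_le q N
  set T := t * (k + 1) with hT
  have hTN : maximalIdeal R ^ T • N ≤ q • N := by
    have h1 : maximalIdeal R ^ T • N ≤ (q ^ (k + 1) • ⊤) ⊓ N :=
      le_inf ((Submodule.smul_mono le_rfl le_top).trans (hpow (k + 1))) Submodule.smul_le_right
    have h2 := hk (k + 1) (by omega)
    rw [show k + 1 - k = 1 by omega, pow_one] at h2
    exact h1.trans h2
  set n1 := c + n0 + nst + 1 with hn1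
  have key : q ^ n1 • N ≤ q ^ (n1 + 1) • N := by
    intro w hw
    have hwN : w ∈ N := Submodule.smul_le_right hw
    have hwF : w ∈ F' := by
      refine hn0 (Submodule.smul_mono ?_ le_rfl hw)
      exact (Ideal.pow_right_mono hq n1).trans (Ideal.pow_le_pow_right (by omega))
    have hwc : ∀ j : ℕ, x ^ j • w ∈ q ^ c • N := by
      intro j
      exact Submodule.smul_mem _ _
        (Submodule.smul_mono_left (Ideal.pow_le_pow_right (by omega)) hw)
    have hwNj : ∀ j : ℕ, x ^ j • w ∈ N := fun j => N.smul_mem _ hwN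
    have base : x ^ T • w ∈ q ^ (n1 + T + 1) • N := by
      have hsplit : x ^ T • w = u ^ T • w := by
        obtain ⟨Pc, hPc⟩ := sub_dvd_pow_sub_pow x u T
        have hxv : x - u = v := by rw [hxuv]; ring
        have hz : (x ^ T - u ^ T) • w = 0 := by
          rw [hPc, hxv, mul_smul]
          exact hv _ (F'.smul_mem Pc hwF)
        have hz2 : x ^ T • w - u ^ T • w = 0 := by rw [← sub_smul]; exact hz
        exact sub_eq_zero.mp hz2
      rw [hsplit]
      have huT : u ^ T ∈ maximalIdeal R ^ T * q ^ T := by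
        rw [← mul_pow]; exact Ideal.pow_mem_pow hu T
      have hmem : u ^ T • w ∈ (maximalIdeal R ^ T * q ^ T) • (q ^ n1 • N) :=
        Submodule.smul_mem_smul huT hw
      have hle : (maximalIdeal R ^ T * q ^ T) • (q ^ n1 • N) ≤ q ^ (n1 + T + 1) • N := by
        calc (maximalIdeal R ^ T * q ^ T) • (q ^ n1 • N)
            = maximalIdeal R ^ T • (q ^ T • (q ^ n1 • N)) := mulSmul_aux _ _ _
          _ = maximalIdeal R ^ T • ((q ^ T * q ^ n1) • N) := by rw [mulSmul_aux]
          _ = maximalIdeal R ^ T • (q ^ (T + n1) • N) := by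
              rw [show (q : Ideal R) ^ (T + n1) = q ^ T * q ^ n1 from pow_add q T n1]
          _ = q ^ (T + n1) • (maximalIdeal R ^ T • N) := smulComm_aux _ _ _
          _ ≤ q ^ (T + n1) • (q • N) := Submodule.smul_mono le_rfl hTN
          _ = (q ^ (T + n1) * q) • N := (mulSmul_aux _ _ _).symm
          _ = q ^ (n1 + T + 1) • N := by
              rw [← pow_succ, show T + n1 + 1 = n1 + T + 1 by omega]
      exact hle hmem
    have peel : ∀ i, i ≤ T → x ^ (T - i) • w ∈ q ^ (n1 + (T - i) + 1) • N := by
      intro i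
      induction i with
      | zero => intro _; simpa using base
      | succ i ih =>
        intro hiT
        have ih' := ih (by omega)
        set j := T - (i + 1) with hj
        have hji : T - i = j + 1 := by omega
        have hmem : x ^ j • w ∈ ((q ^ (n1 + j + 1 + 1) • N).comap (LinearMap.lsmul R M x) ⊓ N)
            ⊓ (q ^ c • N) := by
          refine Submodule.mem_inf.mpr ⟨Submodule.mem_inf.mpr ⟨?_, hwNj j⟩, hwc j⟩
          rw [Submodule.mem_comap]
          have happ : (LinearMap.lsmul R M x) (x ^ j • w) = x ^ (j + 1) • w := by
            rw [LinearMap.lsmul_apply, smul_smul, ← pow_succ']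
          rw [happ, ← hji]
          have harith : n1 + (T - i) + 1 = n1 + j + 1 + 1 := by omega
          rw [harith] at ih'
          exact ih'
        rw [hnst (n1 + j + 1) (by omega)] at hmem
        exact hmem
    have hfinal := peel T le_rfl
    simpa using hfinal
  have hstab : q ^ n1 • N = q ^ (n1 + 1) • N :=
    le_antisymm key (by
      calc q ^ (n1 + 1) • N = (q ^ n1 * q) • N := by rw [pow_succ]
        _ = q ^ n1 • (q • N) := mulSmul_aux _ _ _
        _ ≤ q ^ n1 • N := Submodule.smul_mono le_rfl Submodule.smul_le_right)
  have hbot : q ^ n1 • N = ⊥ := by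
    refine Submodule.eq_bot_of_le_smul_of_le_jacobson_bot q _ (IsNoetherian.noetherian _)
      (le_of_eq ?_) (hq.trans (IsLocalRing.maximalIdeal_le_jacobson ⊥))
    calc q ^ n1 • N = q ^ (n1 + 1) • N := hstab
      _ = (q * q ^ n1) • N := by rw [← pow_succ']
      _ = q • (q ^ n1 • N) := mulSmul_aux _ _ _
  refine ⟨t * (k + n1), le_bot_iff.mp ?_⟩
  have h1 : maximalIdeal R ^ (t * (k + n1)) • N ≤ (q ^ (k + n1) • ⊤) ⊓ N :=
    le_inf ((Submodule.smul_mono le_rfl le_top).trans (hpow _)) Submodule.smul_le_right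
  have h2 := hk (k + n1) (by omega)
  rw [show k + n1 - k = n1 by omega] at h2
  exact (h1.trans h2).trans (le_of_eq hbot)

/-- Exchange construction: given a distinguished s.o.p. `z` generating `q`, an element
`x = ∑ aⱼ • zⱼ` with `a j0` a unit, such that `z 0` satisfies all annihilator constraints
up to level `j0`, we can rearrange to a distinguished s.o.p. starting with `x`. -/
lemma construct_aux {M : Type*} [AddCommGroup M] [Module R M]
    (F : ℕ → Submodule R M) (s : ℕ) {d : ℕ} (hd0 : 0 < d)
    (z : Fin d → R) (hz : IsDistSOP R M F s z)
    (x : R) (a : Fin d → R) (hxa : ∑ j, a j • z j = x)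
    (j0 : Fin d) (hunit : IsUnit (a j0))
    (hP : ∀ i, 1 ≤ i → i ≤ s → ∀ k : ℕ, sdim R (F i) = (k : WithBot ℕ∞) →
      k ≤ (j0 : ℕ) → z ⟨0, hd0⟩ ∈ Module.annihilator R ↥(F i)) :
    ∃ y : Fin d → R, IsDistSOP R M F s y ∧ y ⟨0, hd0⟩ = x ∧
      Ideal.span (Set.range z) = Ideal.span (Set.range y) := by
  classical
  set i0 : Fin d := ⟨0, hd0⟩ with hi0
  set y : Fin d → R := fun j => if (j : ℕ) = 0 then x else if j = j0 then z i0 else z j with hy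
  have hy0 : ∀ j : Fin d, (j : ℕ) = 0 → y j = x := by
    intro j h; simp only [hy]; rw [if_pos h]
  have hyj0 : ∀ j : Fin d, (j : ℕ) ≠ 0 → j = j0 → y j = z i0 := by
    intro j h h'; simp only [hy]; rw [if_neg h, if_pos h']
  have hyo : ∀ j : Fin d, (j : ℕ) ≠ 0 → j ≠ j0 → y j = z j := by
    intro j h h'; simp only [hy]; rw [if_neg h, if_neg h']
  have hi00 : ((i0 : Fin d) : ℕ) = 0 := rfl
  have hxQ : x ∈ Ideal.span (Set.range z) := by
    rw [← hxa]
    exact Submodule.sum_mem _ fun j _ =>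
      Ideal.mul_mem_left _ _ (Ideal.subset_span ⟨j, rfl⟩)
  have hq0 : ∀ i, 1 ≤ i → i ≤ s → ∀ k : ℕ, sdim R (F i) = (k : WithBot ℕ∞) → k = 0 →
      Ideal.span (Set.range z) ≤ Module.annihilator R ↥(F i) := by
    intro i h1 h2 k hk hk0
    refine Ideal.span_le.mpr ?_
    rintro _ ⟨j, rfl⟩
    exact hz.2 i h1 h2 k hk j (by omega)
  have hxY : x ∈ Ideal.span (Set.range y) :=
    Ideal.subset_span ⟨i0, hy0 i0 hi00⟩
  have hS : Ideal.span (Set.range z) = Ideal.span (Set.range y) := by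
    apply le_antisymm
    · refine Ideal.span_le.mpr ?_
      rintro _ ⟨j, rfl⟩
      have hzY : ∀ j' : Fin d, j' ≠ j0 → z j' ∈ Ideal.span (Set.range y) := by
        intro j' hj'
        by_cases h0 : (j' : ℕ) = 0
        · have hj0ne : (j0 : ℕ) ≠ 0 := by
            intro hc
            exact hj' (by apply Fin.ext; omega)
          have hji0 : j' = i0 := by apply Fin.ext; simpa using h0
          rw [hji0]
          exact Ideal.subset_span ⟨j0, hyj0 j0 hj0ne rfl⟩
        · exact Ideal.subset_span ⟨j', hyo j' h0 hj'⟩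
      by_cases hjj0 : j = j0
      · subst hjj0
        have hsum := Finset.add_sum_erase Finset.univ (fun j' => a j' • z j') (Finset.mem_univ j)
        rw [hxa] at hsum
        have hrest : ∑ j' ∈ Finset.univ.erase j, a j' • z j' ∈ Ideal.span (Set.range y) := by
          refine Submodule.sum_mem _ fun j' hj' => ?_
          exact Ideal.mul_mem_left _ _ (hzY j' (Finset.ne_of_mem_erase hj'))
        have hmem : a j • z j ∈ Ideal.span (Set.range y) := by
          have heq : a j • z j = x - ∑ j' ∈ Finset.univ.erase j, a j' • z j' := by
            rw [eq_sub_iff_add_eq]; exact hsum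
          rw [heq]
          exact Submodule.sub_mem _ hxY hrest
        have hzj : z j = ↑hunit.unit⁻¹ * (a j * z j) := by
          rw [← mul_assoc, IsUnit.val_inv_mul, one_mul]
        rw [hzj]
        exact Ideal.mul_mem_left _ _ (by rwa [← smul_eq_mul])
      · exact hzY j hjj0
    · refine Ideal.span_le.mpr ?_
      rintro _ ⟨j, rfl⟩
      by_cases h0 : (j : ℕ) = 0
      · rw [hy0 j h0]; exact hxQ
      · by_cases hjj0 : j = j0
        · rw [hyj0 j h0 hjj0]; exact Ideal.subset_span ⟨i0, rfl⟩
        · rw [hyo j h0 hjj0]; exact Ideal.subset_span ⟨j, rfl⟩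
  have hzm : ∀ j, z j ∈ maximalIdeal R := hz.1.2.1
  have hxm : x ∈ maximalIdeal R := by
    refine Ideal.span_le.mpr ?_ hxQ
    rintro _ ⟨j, rfl⟩
    exact hzm j
  refine ⟨y, ⟨⟨hz.1.1, ?_, ?_⟩, ?_⟩, ?_, hS⟩
  · intro j
    by_cases h0 : (j : ℕ) = 0
    · rw [hy0 j h0]; exact hxm
    · by_cases hjj0 : j = j0
      · rw [hyj0 j h0 hjj0]; exact hzm i0
      · rw [hyo j h0 hjj0]; exact hzm j
  · rw [← hS]; exact hz.1.2.2
  · intro i h1 h2 k hk j hkj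
    by_cases h0 : (j : ℕ) = 0
    · have hk0 : k = 0 := by omega
      rw [hy0 j h0]
      exact hq0 i h1 h2 k hk hk0 hxQ
    · by_cases hjj0 : j = j0
      · rw [hyj0 j h0 hjj0]
        exact hP i h1 h2 k hk (hjj0 ▸ hkj)
      · rw [hyo j h0 hjj0]
        exact hz.2 i h1 h2 k hk j hkj
  · exact hy0 _ hi00

end AuxiliaryLemmas


/-- Lemma 2.10. -/
theorem statement6
    (S : Type*) [CommRing S] [IsLocalRing S] [IsNoetherianRing S] (hS : IsCMModule S S)
    (R : Type*) [CommRing R] [IsLocalRing R] [IsNoetherianRing R]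
    (f : S →+* R) (hf : Function.Surjective f)
    (M : Type*) [AddCommGroup M] [Module R M] [Module.Finite R M]
    (d : ℕ) (hd0 : 0 < d) (hd : mdim R M = (d : WithBot ℕ∞))
    (D : ℕ → Submodule R M) (s : ℕ) (hD : IsDimFiltration R M D s)
    (q : Ideal R) (hq : IsParamIdeal R M d q) (x : R)
    (hx1 : ∀ i, i < s → IsSuperficial R q (D i) x)
    (hx2 : ∀ i, i < s →
      associatedPrimes R (modx R x (subQuot R (D i) (D (i + 1)))) ⊆
        Assh R (modx R x (subQuot R (D i) (D (i + 1)))) ∪ {maximalIdeal R})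
    (hx3 : ∀ i, 1 ≤ i → i ≤ s → IsSMulRegular (M ⧸ D i) x)
    (F : ℕ → Submodule R M) (hF : IsFiltration R M F s)
    (hFD : ∀ i, i ≤ s → F i ≤ D i ∧ IsFiniteLength R (subQuot R (D i) (F i)))
    (hqdist : IsDistParamIdeal R M F s d q) :
    ∃ y : Fin d → R, IsDistSOP R M F s y ∧ y ⟨0, hd0⟩ = x ∧
      q = Ideal.span (Set.range y) := by
  classical
  obtain ⟨z, hz, hqz⟩ := hqdist
  have hzm : ∀ j, z j ∈ maximalIdeal R := hz.1.2.1
  have hQm : q ≤ maximalIdeal R := by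
    rw [hqz]
    exact Ideal.span_le.mpr (by rintro _ ⟨j, rfl⟩; exact hzm j)
  have hflq : IsFiniteLength R (M ⧸ (q • ⊤ : Submodule R M)) := by
    rw [hqz]; exact hz.1.2.2
  obtain ⟨t, hqt0⟩ := pow_ann_of_finiteLength (R := R) hflq
  have ht : maximalIdeal R ^ t • (⊤ : Submodule R M) ≤ q • ⊤ := by
    refine Submodule.smul_le.mpr fun r hr y _ => ?_
    have h0 := hqt0 r hr (Submodule.Quotient.mk y)
    rwa [← Submodule.Quotient.mk_smul, Submodule.Quotient.mk_eq_zero] at h0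
  have hdimcontra : ∀ (W : Submodule R M) (K e' : ℕ), 1 ≤ e' →
      sdim R W = (e' : WithBot ℕ∞) → maximalIdeal R ^ K • W = ⊥ → False := by
    intro W K e' he' hW hbot
    have h1 : ringKrullDim (R ⧸ Module.annihilator R ↥W) ≤ 0 :=
      ringKrullDim_quotient_nonpos (R := R) (pow_le_annihilator_of_smul_eq_bot (R := R) hbot)
    have h2 : sdim R W ≤ 0 := h1
    rw [hW] at h2
    have := natcast_nonpos_aux h2
    omega
  rcases Nat.eq_zero_or_pos s with hs0 | hs1
  · exfalso
    have htop : (⊤ : Submodule R M) = H0 R M := by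
      rw [← hD.1, ← hD.2.1, hs0]
    obtain ⟨K, hK⟩ := exists_H0_killed (R := R) M
    have hann : maximalIdeal R ^ K ≤ Module.annihilator R M := fun r hr =>
      Module.mem_annihilator.mpr fun w => hK r hr w (htop ▸ Submodule.mem_top)
    have h1 : ringKrullDim (R ⧸ Module.annihilator R M) ≤ 0 := ringKrullDim_quotient_nonpos (R := R) hann
    have h2 : mdim R M ≤ 0 := h1
    rw [hd] at h2
    have := natcast_nonpos_aux h2
    omega
  have hxq : x ∈ q := (hx1 0 hs1).1
  have hxz : x ∈ Submodule.span R (Set.range z) := by rw [hqz] at hxq; exact hxq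
  obtain ⟨a, hxa⟩ := (Submodule.mem_span_range_iff_exists_fun R).mp hxz
  set Kset : Set ℕ := {k | 1 ≤ k ∧ ∃ i, 1 ≤ i ∧ i ≤ s ∧ sdim R (F i) = (k : WithBot ℕ∞)}
    with hKsetdef
  set e : ℕ := if h : Kset.Nonempty then sInf Kset else d with he
  have hemem : ∀ k ∈ Kset, e ≤ k := by
    intro k hk
    rw [he, dif_pos ⟨k, hk⟩]
    exact Nat.sInf_le hk
  by_cases hcase : ∃ j : Fin d, (j : ℕ) < e ∧ IsUnit (a j)
  · obtain ⟨j0, hj0e, hj0u⟩ := hcase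
    have hP : ∀ i, 1 ≤ i → i ≤ s → ∀ k : ℕ, sdim R (F i) = (k : WithBot ℕ∞) →
        k ≤ (j0 : ℕ) → z ⟨0, hd0⟩ ∈ Module.annihilator R ↥(F i) := by
      intro i h1 h2 k hk hkj
      have hk0 : k = 0 := by
        by_contra hk0
        have hmem : k ∈ Kset := ⟨by omega, i, h1, h2, hk⟩
        have := hemem k hmem
        omega
      exact hz.2 i h1 h2 k hk ⟨0, hd0⟩ (by simp [hk0])
    obtain ⟨y, hy1, hy2, hy3⟩ := construct_aux (R := R) F s hd0 z hz x a hxa j0 hj0u hP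
    exact ⟨y, hy1, hy2, hqz.trans hy3⟩
  · push_neg at hcase
    have hmem_m : ∀ j : Fin d, (j : ℕ) < e → a j ∈ maximalIdeal R := by
      intro j hj
      by_contra hmem
      exact hcase j hj (IsLocalRing.notMem_maximalIdeal.mp hmem)
    exfalso
    by_cases hne : Kset.Nonempty
    · have heK : e ∈ Kset := by rw [he, dif_pos hne]; exact Nat.sInf_mem hne
      obtain ⟨he1, i0, hi1, hi2, hie⟩ := heK
      have hi0s : i0 < s := by
        rcases Nat.lt_or_ge i0 s with h | h
        · exact h
        · exfalso
          have hi0 : i0 = s := by omega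
          subst hi0
          obtain ⟨K, hK⟩ := exists_H0_killed (R := R) M
          have hFs : F i0 ≤ H0 R M := (hFD i0 le_rfl).1.trans (le_of_eq hD.2.1)
          have hbot : maximalIdeal R ^ K • F i0 = ⊥ := by
            refine le_bot_iff.mp (Submodule.smul_le.mpr fun r hr w hw => ?_)
            exact (Submodule.mem_bot R).mpr (hK r hr w (hFs hw))
          exact hdimcontra (F i0) K e he1 hie hbot
      obtain ⟨n0, hn0'⟩ := pow_ann_of_finiteLength (R := R) (hFD i0 (le_of_lt hi0s)).2
      have hn0 : maximalIdeal R ^ n0 • D i0 ≤ F i0 := by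
        refine Submodule.smul_le.mpr fun r hr w hw => ?_
        have h0 := hn0' r hr (Submodule.Quotient.mk (⟨w, hw⟩ : ↥(D i0)))
        rw [← Submodule.Quotient.mk_smul, Submodule.Quotient.mk_eq_zero] at h0
        simpa [Submodule.mem_comap] using h0
      set u : R := ∑ j ∈ Finset.univ.filter (fun j : Fin d => (j : ℕ) < e), a j • z j with hu'
      set v : R := ∑ j ∈ Finset.univ.filter (fun j : Fin d => ¬ (j : ℕ) < e), a j • z j with hv'
      have hxuv : x = u + v := by
        rw [← hxa, hu', hv', Finset.sum_filter_add_sum_filter_not]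
      have hu : u ∈ maximalIdeal R * q := by
        refine Submodule.sum_mem _ fun j hj => ?_
        have hj' : (j : ℕ) < e := (Finset.mem_filter.mp hj).2
        rw [smul_eq_mul]
        exact Ideal.mul_mem_mul (hmem_m j hj')
          (by rw [hqz]; exact Ideal.subset_span ⟨j, rfl⟩)
      have hvann : v ∈ Module.annihilator R ↥(F i0) := by
        refine Submodule.sum_mem _ fun j hj => ?_
        have hj' : ¬ (j : ℕ) < e := (Finset.mem_filter.mp hj).2
        rw [smul_eq_mul]
        exact Ideal.mul_mem_left _ _ (hz.2 i0 hi1 hi2 e hie j (by omega))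
      have hv : ∀ w ∈ F i0, v • w = (0 : M) := by
        intro w hw
        have h0 := Module.mem_annihilator.mp hvann ⟨w, hw⟩
        have h1 := congrArg Subtype.val h0
        simpa using h1
      obtain ⟨K, hbot⟩ := core_superficial (R := R) q hQm t ht (D i0) (F i0) x u v hxuv hu hv
        n0 hn0 (hx1 i0 hi0s)
      have hbotF : maximalIdeal R ^ K • F i0 = ⊥ :=
        le_bot_iff.mp ((Submodule.smul_mono le_rfl (hFD i0 (le_of_lt hi0s)).1).trans
          (le_of_eq hbot))
      exact hdimcontra (F i0) K e he1 hie hbotF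
    · have hed : e = d := by rw [he, dif_neg hne]
      have hu : x ∈ maximalIdeal R * q := by
        rw [← hxa]
        refine Submodule.sum_mem _ fun j _ => ?_
        rw [smul_eq_mul]
        exact Ideal.mul_mem_mul (hmem_m j (by rw [hed]; exact j.isLt))
          (by rw [hqz]; exact Ideal.subset_span ⟨j, rfl⟩)
      have hsupM : IsSuperficial R q (⊤ : Submodule R M) x := by
        have h := hx1 0 hs1
        rwa [hD.1] at h
      obtain ⟨K, hbot⟩ := core_superficial (R := R) q hQm t ht ⊤ ⊤ x x 0 (by ring) hu
        (fun w _ => zero_smul R w) 0 le_top hsupM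
      have hann : maximalIdeal R ^ K ≤ Module.annihilator R M := fun r hr =>
        Module.mem_annihilator.mpr fun w => by
          have h1 : r • w ∈ (⊥ : Submodule R M) := by
            rw [← hbot]; exact Submodule.smul_mem_smul hr Submodule.mem_top
          simpa using h1
      have h1 : ringKrullDim (R ⧸ Module.annihilator R M) ≤ 0 := ringKrullDim_quotient_nonpos (R := R) hann
      have h2 : mdim R M ≤ 0 := h1
      rw [hd] at h2
      have := natcast_nonpos_aux h2
      omega


end Paper
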